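/- arXiv:2312.14589 — 4 statements merged into one kernel-verified Lean document; each statement's English description precedes it below -/
import Mathlib

section
/- Let D ≥ 1. Fix functions p_{t|0} : ℝ^D → (0,∞), p_{τ|0} : ℝ^D → (0,∞), and p_{τ|t} : ℝ^D × ℝ^D → (0,∞), (x_τ, x) ↦ p_{τ|t}(x_τ|x), with x ↦ p_{τ|t}(x_τ|x) differentiable for every x_τ. Define the bridge density p_{t|0,τ}(x|x_τ) = p_{t|0}(x) p_{τ|t}(x_τ|x) / p_{τ|0}(x_τ). Let Π be a probability measure on ℝ^D, define π_{t|0}(x) = ∫ p_{t|0,τ}(x|x_τ) dΠ(x_τ), assumed finite and strictly positive, and A(x) = (∫ ∇_x ln p_{τ|t}(x_τ|x) · p_{t|0,τ}(x|x_τ) dΠ(x_τ)) / π_{t|0}(x), assumed finite. Assume that the function x ↦ ∫ (p_{τ|t}(x_τ|x)/p_{τ|0}(x_τ)) dΠ(x_τ) is finite, strictly positive, and differentiable with gradient ∫ (∇_x p_{τ|t}(x_τ|x)/p_{τ|0}(x_τ)) dΠ(x_τ). Then for every x, A(x) = ∇_x ln ∫ (p_{τ|t}(x_τ|x)/p_{τ|0}(x_τ))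 dΠ(x_τ). -/
open MeasureTheory Real Set

/-- The gradient of a scalar function on `ℝ^D`, given coordinatewise by the
partial derivatives. -/
noncomputable def grad {D : ℕ} (f : (Fin D → ℝ) → ℝ) (x : Fin D → ℝ) : Fin D → ℝ :=
  fun i => fderiv ℝ f x (Pi.single i 1)

lemma grad_log_eq {D : ℕ} {f : (Fin D → ℝ) → ℝ} {x : Fin D → ℝ}
    (hf : DifferentiableAt ℝ f x) (hx : f x ≠ 0) :
    grad (fun y => Real.log (f y)) x = (f x)⁻¹ • grad f x := by
  have h := hf.hasFDerivAt.log hx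
  funext i
  simp [grad, h.fderiv]

/-- First drift adjustment identity for a constant initial value: the drift adjustment
`A(x) = (∫ ∇_x ln p_{τ|t}(x_τ|x) p_{t|0,τ}(x|x_τ) dΠ(x_τ)) / π_{t|0}(x)` of the diffusion
bridge mixture transport equals `∇_x ln ∫ (p_{τ|t}(x_τ|x)/p_{τ|0}(x_τ)) dΠ(x_τ)`. -/
theorem drift_adjustment_identity_constant_start
    {D : ℕ} (hD : 1 ≤ D)
    (pt0 : (Fin D → ℝ) → ℝ) (pτ0 : (Fin D → ℝ) → ℝ)
    (pτt : (Fin D → ℝ) → (Fin D → ℝ) → ℝ)  -- `pτt xτ x` is `p_{τ|t}(x_τ|x)`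
    (hpt0pos : ∀ x, 0 < pt0 x) (hpτ0pos : ∀ xτ, 0 < pτ0 xτ)
    (hpτtpos : ∀ xτ x, 0 < pτt xτ x)
    (hpτtdiff : ∀ xτ, Differentiable ℝ (pτt xτ))
    (Pm : Measure (Fin D → ℝ)) [IsProbabilityMeasure Pm]
    (b : (Fin D → ℝ) → (Fin D → ℝ) → ℝ)  -- the bridge density `p_{t|0,τ}(x|x_τ)`
    (hb : ∀ xτ x, b xτ x = pt0 x * pτt xτ x / pτ0 xτ)
    (π0 : (Fin D → ℝ) → ℝ) (A : (Fin D → ℝ) → Fin D → ℝ)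
    (hπ0int : ∀ x, Integrable (fun xτ => b xτ x) Pm)
    (hπ0 : ∀ x, π0 x = ∫ xτ, b xτ x ∂Pm)
    (hπ0pos : ∀ x, 0 < π0 x)
    (hAint : ∀ x, Integrable
      (fun xτ => b xτ x • grad (fun y => Real.log (pτt xτ y)) x) Pm)
    (hA : ∀ x, A x
      = (π0 x)⁻¹ • ∫ xτ, b xτ x • grad (fun y => Real.log (pτt xτ y)) x ∂Pm)
    (F : (Fin D → ℝ) → ℝ)
    (hFint : ∀ x, Integrable (fun xτ => pτt xτ x / pτ0 xτ) Pm)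
    (hF : ∀ x, F x = ∫ xτ, pτt xτ x / pτ0 xτ ∂Pm)
    (hFpos : ∀ x, 0 < F x)
    (hFdiff : Differentiable ℝ F)
    (hFgradint : ∀ x, Integrable (fun xτ => (pτ0 xτ)⁻¹ • grad (pτt xτ) x) Pm)
    (hFgrad : ∀ x, grad F x = ∫ xτ, (pτ0 xτ)⁻¹ • grad (pτt xτ) x ∂Pm) :
    ∀ x, A x = grad (fun y => Real.log (F y)) x := by
  intro x
  have hFd : DifferentiableAt ℝ F x := hFdiff x
  have hFne : F x ≠ 0 := (hFpos x).ne'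
  have hlogF : grad (fun y => Real.log (F y)) x = (F x)⁻¹ • grad F x :=
    grad_log_eq hFd hFne
  have hkey : ∀ xτ, b xτ x • grad (fun y => Real.log (pτt xτ y)) x
      = pt0 x • ((pτ0 xτ)⁻¹ • grad (pτt xτ) x) := by
    intro xτ
    have h1 : grad (fun y => Real.log (pτt xτ y)) x
        = (pτt xτ x)⁻¹ • grad (pτt xτ) x :=
      grad_log_eq ((hpτtdiff xτ) x) (hpτtpos xτ x).ne'
    rw [h1, hb, smul_smul, smul_smul]
    congr 1
    rw [div_eq_mul_inv, mul_right_comm, mul_inv_cancel_right₀ (hpτtpos xτ x).ne']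
  have hint : (∫ xτ, b xτ x • grad (fun y => Real.log (pτt xτ y)) x ∂Pm)
      = pt0 x • ∫ xτ, (pτ0 xτ)⁻¹ • grad (pτt xτ) x ∂Pm := by
    rw [← integral_smul]
    exact integral_congr_ae (Filter.Eventually.of_forall hkey)
  have hπ0F : π0 x = pt0 x * F x := by
    rw [hπ0, hF, ← integral_const_mul]
    refine integral_congr_ae (Filter.Eventually.of_forall fun xτ => ?_)
    show b xτ x = pt0 x * (pτt xτ x / pτ0 xτ)
    rw [hb]; ring
  rw [hA, hlogF, hint, ← hFgrad, hπ0F, smul_smul]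
  congr 1
  have h0 : pt0 x ≠ 0 := (hpt0pos x).ne'
  field_simp
end

section
/- Let D ≥ 1. Fix functions p_{t|0} : ℝ^D → (0,∞), p_{τ|0} : ℝ^D → (0,∞), and p_{τ|t} : ℝ^D × ℝ^D → (0,∞), (x_τ, x) ↦ p_{τ|t}(x_τ|x), with x ↦ p_{τ|t}(x_τ|x) differentiable for every x_τ and with p_{t|0} differentiable. Define the bridge density p_{t|0,τ}(x|x_τ) = p_{t|0}(x) p_{τ|t}(x_τ|x) / p_{τ|0}(x_τ). Let Π be a probability measure on ℝ^D, define π_{t|0}(x) = ∫ p_{t|0,τ}(x|x_τ) dΠ(x_τ), assumed finite, strictly positive, and differentiable with gradient ∫ ∇_x p_{t|0,τ}(x|x_τ) dΠ(x_τ), and A(x) = (∫ ∇_x ln p_{τ|t}(x_τ|x) · p_{t|0,τ}(x|x_τ) dΠ(x_τ)) / π_{t|0}(x), assumed finite. Then for every x, A(x) = ∇_x ln π_{t|0}(x) − ∇_x ln p_{t|0}(x). -/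
open MeasureTheory Real Set

lemma grad_log {D : ℕ} (f : (Fin D → ℝ) → ℝ) (x : Fin D → ℝ)
    (hf : DifferentiableAt ℝ f x) (hx : f x ≠ 0) :
    grad (fun y => Real.log (f y)) x = (f x)⁻¹ • grad f x := by
  funext i
  have h := (hf.hasFDerivAt.log hx).fderiv
  simp only [grad, h, Pi.smul_apply, ContinuousLinearMap.coe_smul', Pi.smul_apply,
    smul_eq_mul]

lemma key_pointwise {D : ℕ} (pt0 pτ : (Fin D → ℝ) → ℝ) (c : ℝ) (hc : c ≠ 0)
    (hpt0pos : ∀ x, 0 < pt0 x) (hpτpos : ∀ x, 0 < pτ x)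
    (hpτdiff : Differentiable ℝ pτ) (hpt0diff : Differentiable ℝ pt0)
    (x : Fin D → ℝ) :
    (pt0 x * pτ x / c) • grad (fun y => Real.log (pτ y)) x
      = grad (fun y => pt0 y * pτ y / c) x
        - (pt0 x * pτ x / c) • grad (fun y => Real.log (pt0 y)) x := by
  have hpt0 : pt0 x ≠ 0 := (hpt0pos x).ne'
  have hpτ : pτ x ≠ 0 := (hpτpos x).ne'
  have hder : HasFDerivAt (fun y => pt0 y * pτ y / c)
      (c⁻¹ • (pt0 x • fderiv ℝ pτ x + pτ x • fderiv ℝ pt0 x)) x := by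
    simpa [div_eq_mul_inv] using
      (((hpt0diff x).hasFDerivAt.mul (hpτdiff x).hasFDerivAt).mul_const c⁻¹)
  rw [grad_log _ _ (hpτdiff x) hpτ, grad_log _ _ (hpt0diff x) hpt0]
  funext i
  simp only [Pi.sub_apply, Pi.smul_apply, smul_eq_mul, grad, hder.fderiv,
    ContinuousLinearMap.add_apply,
    ContinuousLinearMap.coe_smul', Pi.smul_apply, ContinuousLinearMap.smul_apply]
  field_simp
  ring

/-- Second drift adjustment identity (score-difference representation) for a constant
initial value: the drift adjustment `A(x)` of the diffusion bridge mixture transport equals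
`∇_x ln π_{t|0}(x) − ∇_x ln p_{t|0}(x)`. -/
theorem drift_adjustment_score_difference
    {D : ℕ} (hD : 1 ≤ D)
    (pt0 : (Fin D → ℝ) → ℝ) (pτ0 : (Fin D → ℝ) → ℝ)
    (pτt : (Fin D → ℝ) → (Fin D → ℝ) → ℝ)  -- `pτt xτ x` is `p_{τ|t}(x_τ|x)`
    (hpt0pos : ∀ x, 0 < pt0 x) (hpτ0pos : ∀ xτ, 0 < pτ0 xτ)
    (hpτtpos : ∀ xτ x, 0 < pτt xτ x)
    (hpτtdiff : ∀ xτ, Differentiable ℝ (pτt xτ))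
    (hpt0diff : Differentiable ℝ pt0)
    (Pm : Measure (Fin D → ℝ)) [IsProbabilityMeasure Pm]
    (b : (Fin D → ℝ) → (Fin D → ℝ) → ℝ)  -- the bridge density `p_{t|0,τ}(x|x_τ)`
    (hb : ∀ xτ x, b xτ x = pt0 x * pτt xτ x / pτ0 xτ)
    (π0 : (Fin D → ℝ) → ℝ) (A : (Fin D → ℝ) → Fin D → ℝ)
    (hπ0int : ∀ x, Integrable (fun xτ => b xτ x) Pm)
    (hπ0 : ∀ x, π0 x = ∫ xτ, b xτ x ∂Pm)
    (hπ0pos : ∀ x, 0 < π0 x)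
    (hπ0diff : Differentiable ℝ π0)
    (hπ0gradint : ∀ x, Integrable (fun xτ => grad (fun y => b xτ y) x) Pm)
    (hπ0grad : ∀ x, grad π0 x = ∫ xτ, grad (fun y => b xτ y) x ∂Pm)
    (hAint : ∀ x, Integrable
      (fun xτ => b xτ x • grad (fun y => Real.log (pτt xτ y)) x) Pm)
    (hA : ∀ x, A x
      = (π0 x)⁻¹ • ∫ xτ, b xτ x • grad (fun y => Real.log (pτt xτ y)) x ∂Pm) :
    ∀ x, A x = grad (fun y => Real.log (π0 y)) x - grad (fun y => Real.log (pt0 y)) x := by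
  intro x
  have hbfun : ∀ xτ, (fun y => b xτ y) = (fun y => pt0 y * pτt xτ y / pτ0 xτ) := by
    intro xτ; funext y; exact hb xτ y
  have hkey : ∀ xτ, b xτ x • grad (fun y => Real.log (pτt xτ y)) x
      = grad (fun y => b xτ y) x
        - b xτ x • grad (fun y => Real.log (pt0 y)) x := by
    intro xτ
    rw [hbfun xτ, hb xτ x]
    exact key_pointwise pt0 (pτt xτ) (pτ0 xτ) (hpτ0pos xτ).ne' hpt0pos (hpτtpos xτ)
      (hpτtdiff xτ) hpt0diff x
  have hint : (∫ xτ, b xτ x • grad (fun y => Real.log (pτt xτ y)) x ∂Pm)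
      = grad π0 x - π0 x • grad (fun y => Real.log (pt0 y)) x := by
    calc (∫ xτ, b xτ x • grad (fun y => Real.log (pτt xτ y)) x ∂Pm)
        = ∫ xτ, (grad (fun y => b xτ y) x
            - b xτ x • grad (fun y => Real.log (pt0 y)) x) ∂Pm := by
          exact integral_congr_ae (Filter.Eventually.of_forall hkey)
      _ = (∫ xτ, grad (fun y => b xτ y) x ∂Pm)
            - ∫ xτ, b xτ x • grad (fun y => Real.log (pt0 y)) x ∂Pm := by
          exact integral_sub (hπ0gradint x) ((hπ0int x).smul_const _)
      _ = grad π0 x - π0 x • grad (fun y => Real.log (pt0 y)) x := by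
          rw [← hπ0grad x, integral_smul_const, ← hπ0 x]
  rw [hA x, hint, smul_sub, smul_smul, inv_mul_cancel₀ (hπ0pos x).ne', one_smul,
    grad_log π0 x (hπ0diff x) (hπ0pos x).ne']
end

section
/- Let D ≥ 1, let Γ be a symmetric positive definite D×D real matrix, let a ≠ 0 and v > 0 be real numbers, and let P be any probability measure on ℝ^D. Define q(y) = ∫ N_D(y; a x₀, v Γ) dP(x₀). Then: (i) q is finite, strictly positive, and differentiable on ℝ^D with ∇q(y) = ∫ ∇_y N_D(y; a x₀, v Γ) dP(x₀); (ii) for every y, the function x₀ ↦ x₀ · N_D(y; a x₀, v Γ)/q(y) is P-integrable, so the posterior mean m(y) = ∫ x₀ (N_D(y; a x₀, v Γ)/q(y)) dP(x₀) is well defined; and (iii) ∇ ln q(y) = (1/v) Γ^{-1} (a m(y) − y) for every y ∈ ℝ^D. -/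
open MeasureTheory Real Set

/-- The multivariate Gaussian density `N_D(x; m, C)` on `ℝ^D` with mean `m` and
(symmetric positive definite) covariance matrix `C`. -/
noncomputable def gaussDensity {D : ℕ} (m : Fin D → ℝ) (C : Matrix (Fin D) (Fin D) ℝ)
    (x : Fin D → ℝ) : ℝ :=
  (2 * Real.pi) ^ (-(D : ℝ) / 2) * C.det ^ (-(1 : ℝ) / 2) *
    Real.exp (-(dotProduct (x - m) (C⁻¹.mulVec (x - m))) / 2)

/-! ### Auxiliary machinery -/

section Aux

open Asymptotics Matrix

variable {D : ℕ}

/-- dot product with `w` as a continuous linear map. -/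
noncomputable def dotCLM (w : Fin D → ℝ) : (Fin D → ℝ) →L[ℝ] ℝ :=
  LinearMap.toContinuousLinearMap
    { toFun := fun h => dotProduct w h
      map_add' := fun x y => dotProduct_add w x y
      map_smul' := fun c x => by simp [dotProduct_smul, smul_eq_mul] }

@[simp] lemma dotCLM_apply (w h : Fin D → ℝ) : dotCLM w h = dotProduct w h := rfl

lemma dotCLM_norm_le (w : Fin D → ℝ) : ‖dotCLM w‖ ≤ (D : ℝ) * ‖w‖ := by
  refine ContinuousLinearMap.opNorm_le_bound _ (by positivity) fun h => ?_
  simp only [dotCLM_apply, dotProduct]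
  calc ‖∑ i, w i * h i‖ ≤ ∑ i : Fin D, ‖w i * h i‖ := norm_sum_le _ _
    _ ≤ ∑ i : Fin D, ‖w‖ * ‖h‖ := by
        refine Finset.sum_le_sum fun i _ => ?_
        rw [norm_mul]
        exact mul_le_mul (norm_le_pi_norm w i) (norm_le_pi_norm h i) (norm_nonneg _)
          (norm_nonneg _)
    _ = (D : ℝ) * ‖w‖ * ‖h‖ := by simp [Finset.card_fin]; ring
    _ = (D : ℝ) * ‖w‖ * ‖h‖ := rfl

/-- the linear-map version of `dotCLM`, used to get continuity in `w`. -/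
noncomputable def dotCLML : (Fin D → ℝ) →ₗ[ℝ] ((Fin D → ℝ) →L[ℝ] ℝ) where
  toFun := dotCLM
  map_add' w w' := by ext h; simp [add_dotProduct]
  map_smul' c w := by ext h; simp [smul_dotProduct, smul_eq_mul]

lemma dotCLM_continuous : Continuous (dotCLM (D := D)) :=
  (dotCLML (D := D)).continuous_of_finiteDimensional

/-- matrix-vector multiplication as a continuous linear map. -/
noncomputable def mulVecCLM (B : Matrix (Fin D) (Fin D) ℝ) : (Fin D → ℝ) →L[ℝ] (Fin D → ℝ) :=
  LinearMap.toContinuousLinearMap B.mulVecLin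

@[simp] lemma mulVecCLM_apply (B : Matrix (Fin D) (Fin D) ℝ) (h : Fin D → ℝ) :
    mulVecCLM B h = B.mulVec h := rfl

lemma posdef_dot_pos {B : Matrix (Fin D) (Fin D) ℝ} (hB : B.PosDef) {z : Fin D → ℝ}
    (hz : z ≠ 0) : 0 < dotProduct z (B.mulVec z) := by
  have := hB.dotProduct_mulVec_pos hz
  simpa using this

lemma posdef_dot_nonneg {B : Matrix (Fin D) (Fin D) ℝ} (hB : B.PosDef) (z : Fin D → ℝ) :
    0 ≤ dotProduct z (B.mulVec z) := by
  rcases eq_or_ne z 0 with rfl | hz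
  · simp
  · exact (posdef_dot_pos hB hz).le

lemma quad_continuous (B : Matrix (Fin D) (Fin D) ℝ) :
    Continuous fun z : Fin D → ℝ => dotProduct z (B.mulVec z) := by
  simp only [dotProduct, Matrix.mulVec]
  fun_prop

/-- uniform quadratic lower bound for a positive definite matrix, via
compactness of the unit sphere. -/
lemma quad_lower_bound (hD : 1 ≤ D) {B : Matrix (Fin D) (Fin D) ℝ} (hB : B.PosDef) :
    ∃ lam > 0, ∀ z : Fin D → ℝ, lam * ‖z‖ ^ 2 ≤ dotProduct z (B.mulVec z) := by
  have hne : (Metric.sphere (0 : Fin D → ℝ) 1).Nonempty := by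
    refine ⟨Pi.single ⟨0, hD⟩ 1, ?_⟩
    simp [mem_sphere_zero_iff_norm, Pi.norm_single]
  have hcomp : IsCompact (Metric.sphere (0 : Fin D → ℝ) 1) := isCompact_sphere _ _
  obtain ⟨z₀, hz₀, hmin⟩ := hcomp.exists_isMinOn hne ((quad_continuous B).continuousOn)
  have hz₀ne : z₀ ≠ 0 := by
    intro h
    rw [mem_sphere_zero_iff_norm] at hz₀
    simp [h] at hz₀
  refine ⟨_, posdef_dot_pos hB hz₀ne, fun z => ?_⟩
  rcases eq_or_ne z 0 with rfl | hz
  · simp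
  · have hnz : ‖z‖ ≠ 0 := norm_ne_zero_iff.2 hz
    have hmem : ‖z‖⁻¹ • z ∈ Metric.sphere (0 : Fin D → ℝ) 1 := by
      simp [norm_smul, abs_of_nonneg (inv_nonneg.2 (norm_nonneg z)), inv_mul_cancel₀ hnz]
    have hle : dotProduct z₀ (B.mulVec z₀)
        ≤ dotProduct (‖z‖⁻¹ • z) (B.mulVec (‖z‖⁻¹ • z)) := hmin hmem
    have hexp : dotProduct (‖z‖⁻¹ • z) (B.mulVec (‖z‖⁻¹ • z))
        = ‖z‖⁻¹ ^ 2 * dotProduct z (B.mulVec z) := by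
      rw [Matrix.mulVec_smul, dotProduct_smul, smul_dotProduct]
      simp [smul_eq_mul]; ring
    rw [hexp] at hle
    have h2 : (0:ℝ) < ‖z‖ ^ 2 := by positivity
    calc dotProduct z₀ (B.mulVec z₀) * ‖z‖ ^ 2
        ≤ (‖z‖⁻¹ ^ 2 * dotProduct z (B.mulVec z)) * ‖z‖ ^ 2 := by nlinarith [hle, h2]
      _ = dotProduct z (B.mulVec z) := by field_simp

/-- derivative of the (symmetric) quadratic form. -/
lemma hasFDerivAt_quad {B : Matrix (Fin D) (Fin D) ℝ} (hsym : Bᵀ = B) (w₀ : Fin D → ℝ) :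
    HasFDerivAt (fun w => dotProduct w (B.mulVec w))
      (dotCLM ((2:ℝ) • B.mulVec w₀)) w₀ := by
  rw [hasFDerivAt_iff_isLittleO_nhds_zero]
  have key : ∀ h : Fin D → ℝ,
      dotProduct (w₀ + h) (B.mulVec (w₀ + h)) - dotProduct w₀ (B.mulVec w₀)
        - dotCLM ((2:ℝ) • B.mulVec w₀) h = dotProduct h (B.mulVec h) := by
    intro h
    have h1 : dotProduct w₀ (B.mulVec h) = dotProduct (B.mulVec w₀) h := by
      rw [Matrix.dotProduct_mulVec, ← Matrix.mulVec_transpose, hsym]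
    simp only [dotCLM_apply, Matrix.mulVec_add, dotProduct_add, add_dotProduct,
      smul_dotProduct]
    have h2 : dotProduct h (B.mulVec w₀) = dotProduct (B.mulVec w₀) h :=
      dotProduct_comm _ _
    rw [h1, h2]
    simp [smul_eq_mul]; ring
  simp only [key]
  have hbig : (fun h : Fin D → ℝ => dotProduct h (B.mulVec h))
      =O[nhds 0] fun h => ‖h‖ ^ 2 := by
    refine IsBigO.of_bound ((D : ℝ) * ‖mulVecCLM B‖) ?_
    filter_upwards with h
    have h2 : ‖dotProduct h (B.mulVec h)‖ ≤ ((D:ℝ) * ‖h‖) * ‖B.mulVec h‖ := by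
      calc ‖dotProduct h (B.mulVec h)‖ = ‖dotCLM h (B.mulVec h)‖ := rfl
        _ ≤ ‖dotCLM h‖ * ‖B.mulVec h‖ := (dotCLM h).le_opNorm _
        _ ≤ ((D:ℝ) * ‖h‖) * ‖B.mulVec h‖ :=
            mul_le_mul_of_nonneg_right (dotCLM_norm_le h) (norm_nonneg _)
    have h3 : ‖B.mulVec h‖ ≤ ‖mulVecCLM B‖ * ‖h‖ := (mulVecCLM B).le_opNorm h
    calc ‖dotProduct h (B.mulVec h)‖ ≤ ((D:ℝ) * ‖h‖) * (‖mulVecCLM B‖ * ‖h‖) :=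
          h2.trans (mul_le_mul_of_nonneg_left h3 (by positivity))
      _ = (D:ℝ) * ‖mulVecCLM B‖ * ‖‖h‖ ^ 2‖ := by rw [norm_pow, norm_norm]; ring
  exact hbig.trans_isLittleO (isLittleO_norm_pow_id one_lt_two)

/-- the derivative of the Gaussian density. -/
lemma hasFDerivAt_gauss {C : Matrix (Fin D) (Fin D) ℝ} (hsym : (C⁻¹)ᵀ = C⁻¹)
    (m y : Fin D → ℝ) :
    HasFDerivAt (gaussDensity m C)
      ((-(gaussDensity m C y)) • dotCLM (C⁻¹.mulVec (y - m))) y := by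
  set c : ℝ := (2 * Real.pi) ^ (-(D : ℝ) / 2) * C.det ^ (-(1 : ℝ) / 2) with hc
  have h₁ : HasFDerivAt (fun x : Fin D → ℝ => x - m)
      (ContinuousLinearMap.id ℝ (Fin D → ℝ)) y := (hasFDerivAt_id y).sub_const m
  have h₂ : HasFDerivAt (fun x : Fin D → ℝ => dotProduct (x - m) (C⁻¹.mulVec (x - m)))
      (dotCLM ((2:ℝ) • C⁻¹.mulVec (y - m))) y := by
    have h := (hasFDerivAt_quad hsym (y - m)).comp y h₁
    rw [ContinuousLinearMap.comp_id] at h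
    exact h
  have h₃ := ((h₂.const_mul ((-1:ℝ)/2)).exp).const_mul c
  have hfun : gaussDensity m C
      = fun x => c * Real.exp ((-1:ℝ)/2 * dotProduct (x - m) (C⁻¹.mulVec (x - m))) := by
    funext x
    rw [gaussDensity, ← hc]
    ring_nf
  rw [hfun]
  refine h₃.congr_fderiv ?_
  ext h
  simp only [ContinuousLinearMap.coe_smul', Pi.smul_apply, dotCLM_apply, smul_eq_mul,
    smul_dotProduct]
  ring

lemma exp_decay_bound {lam r : ℝ} (hlam : 0 < lam) (hr : 0 ≤ r) :
    r * Real.exp (-(lam * r ^ 2) / 2) ≤ max 1 (2 / lam) := by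
  rcases le_or_gt r 1 with h | h
  · have h1 : Real.exp (-(lam * r ^ 2) / 2) ≤ 1 := by
      rw [Real.exp_le_one_iff]
      nlinarith
    have : r * Real.exp (-(lam * r ^ 2) / 2) ≤ 1 := by nlinarith [Real.exp_pos (-(lam * r^2)/2)]
    exact this.trans (le_max_left _ _)
  · set x : ℝ := lam * r ^ 2 / 2 with hx
    have hx0 : 0 < x := by positivity
    have h1 : x ≤ Real.exp x := (Real.add_one_le_exp x).trans' (by linarith)
    have h2 : Real.exp (-(lam * r ^ 2) / 2) = (Real.exp x)⁻¹ := by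
      rw [← Real.exp_neg, hx]; ring_nf
    have h3 : (Real.exp x)⁻¹ ≤ x⁻¹ := inv_anti₀ hx0 h1
    have h4 : r * x⁻¹ = 2 / (lam * r) := by
      rw [hx]; field_simp
    have h5 : 2 / (lam * r) ≤ 2 / lam := by
      apply div_le_div_of_nonneg_left (by norm_num) hlam
      nlinarith
    calc r * Real.exp (-(lam * r ^ 2) / 2) = r * (Real.exp x)⁻¹ := by rw [h2]
      _ ≤ r * x⁻¹ := by nlinarith
      _ ≤ 2 / lam := by rw [h4]; exact h5
      _ ≤ max 1 (2 / lam) := le_max_right _ _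

lemma gauss_const_pos {C : Matrix (Fin D) (Fin D) ℝ} (hC : C.PosDef) :
    0 < (2 * Real.pi) ^ (-(D : ℝ) / 2) * C.det ^ (-(1 : ℝ) / 2) := by
  have h1 : (0:ℝ) < 2 * Real.pi := by positivity
  have h2 : (0:ℝ) < C.det := hC.det_pos
  positivity

lemma gauss_pos {C : Matrix (Fin D) (Fin D) ℝ} (hC : C.PosDef) (m x : Fin D → ℝ) :
    0 < gaussDensity m C x :=
  mul_pos (gauss_const_pos hC) (Real.exp_pos _)

lemma gauss_le {C : Matrix (Fin D) (Fin D) ℝ} (hC : C.PosDef) (m x : Fin D → ℝ) :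
    gaussDensity m C x ≤ (2 * Real.pi) ^ (-(D : ℝ) / 2) * C.det ^ (-(1 : ℝ) / 2) := by
  have h1 := posdef_dot_nonneg hC.inv (x - m)
  have h2 : Real.exp (-(dotProduct (x - m) (C⁻¹.mulVec (x - m))) / 2) ≤ 1 := by
    rw [Real.exp_le_one_iff]; linarith
  have := gauss_const_pos (D := D) hC
  calc gaussDensity m C x
      ≤ (2 * Real.pi) ^ (-(D : ℝ) / 2) * C.det ^ (-(1 : ℝ) / 2) * 1 :=
        mul_le_mul_of_nonneg_left h2 this.le
    _ = _ := mul_one _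

lemma gauss_le_exp {C : Matrix (Fin D) (Fin D) ℝ} (hC : C.PosDef) {lam : ℝ}
    (hlam : ∀ z : Fin D → ℝ, lam * ‖z‖ ^ 2 ≤ dotProduct z (C⁻¹.mulVec z))
    (m x : Fin D → ℝ) :
    gaussDensity m C x ≤ (2 * Real.pi) ^ (-(D : ℝ) / 2) * C.det ^ (-(1 : ℝ) / 2) *
      Real.exp (-(lam * ‖x - m‖ ^ 2) / 2) := by
  have h := hlam (x - m)
  have := gauss_const_pos (D := D) hC
  refine mul_le_mul_of_nonneg_left ?_ this.le
  exact Real.exp_le_exp.2 (by linarith)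

/-- key uniform bound : the density times the norm of the rescaled displacement is
bounded, uniformly in both the mean and the argument. -/
lemma gauss_grad_bound (hD : 1 ≤ D) {C : Matrix (Fin D) (Fin D) ℝ} (hC : C.PosDef) :
    ∃ K : ℝ, 0 ≤ K ∧ ∀ m x : Fin D → ℝ,
      gaussDensity m C x * ‖C⁻¹.mulVec (x - m)‖ ≤ K := by
  obtain ⟨lam, hlam_pos, hlam⟩ := quad_lower_bound hD hC.inv
  set c : ℝ := (2 * Real.pi) ^ (-(D : ℝ) / 2) * C.det ^ (-(1 : ℝ) / 2) with hc
  have hcpos : 0 < c := gauss_const_pos hC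
  refine ⟨c * ‖mulVecCLM C⁻¹‖ * max 1 (2 / lam), by positivity, fun m x => ?_⟩
  set z : Fin D → ℝ := x - m with hz
  have h1 : gaussDensity m C x ≤ c * Real.exp (-(lam * ‖z‖ ^ 2) / 2) := gauss_le_exp hC hlam m x
  have h2 : ‖C⁻¹.mulVec z‖ ≤ ‖mulVecCLM C⁻¹‖ * ‖z‖ := (mulVecCLM C⁻¹).le_opNorm z
  have h3 : ‖z‖ * Real.exp (-(lam * ‖z‖ ^ 2) / 2) ≤ max 1 (2 / lam) :=
    exp_decay_bound hlam_pos (norm_nonneg z)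
  have hg := (gauss_pos hC m x).le
  have hexp := (Real.exp_pos (-(lam * ‖z‖ ^ 2) / 2)).le
  calc gaussDensity m C x * ‖C⁻¹.mulVec z‖
      ≤ (c * Real.exp (-(lam * ‖z‖ ^ 2) / 2)) * (‖mulVecCLM C⁻¹‖ * ‖z‖) :=
        mul_le_mul h1 h2 (norm_nonneg _) (by positivity)
    _ = c * ‖mulVecCLM C⁻¹‖ * (‖z‖ * Real.exp (-(lam * ‖z‖ ^ 2) / 2)) := by ring
    _ ≤ c * ‖mulVecCLM C⁻¹‖ * max 1 (2 / lam) := by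
        refine mul_le_mul_of_nonneg_left h3 (by positivity)

/-- uniform bound for the density times the norm of the initial point. -/
lemma gauss_mul_norm_bound (hD : 1 ≤ D) {C : Matrix (Fin D) (Fin D) ℝ} (hC : C.PosDef)
    {a : ℝ} (ha : a ≠ 0) (y : Fin D → ℝ) :
    ∃ K : ℝ, 0 ≤ K ∧ ∀ x₀ : Fin D → ℝ,
      gaussDensity (a • x₀) C y * ‖x₀‖ ≤ K := by
  obtain ⟨lam, hlam_pos, hlam⟩ := quad_lower_bound hD hC.inv
  set c : ℝ := (2 * Real.pi) ^ (-(D : ℝ) / 2) * C.det ^ (-(1 : ℝ) / 2) with hc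
  have hcpos : 0 < c := gauss_const_pos hC
  have hmax : (0:ℝ) < max 1 (2 / lam) := lt_max_of_lt_left one_pos
  refine ⟨c * (max 1 (2 / lam) + ‖y‖) / |a|, by positivity, fun x₀ => ?_⟩
  set z : Fin D → ℝ := y - a • x₀ with hzdef
  have h1 : gaussDensity (a • x₀) C y ≤ c * Real.exp (-(lam * ‖z‖ ^ 2) / 2) :=
    gauss_le_exp hC hlam _ _
  have h3 : ‖z‖ * Real.exp (-(lam * ‖z‖ ^ 2) / 2) ≤ max 1 (2 / lam) :=
    exp_decay_bound hlam_pos (norm_nonneg z)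
  have hexp1 : Real.exp (-(lam * ‖z‖ ^ 2) / 2) ≤ 1 := by
    rw [Real.exp_le_one_iff]
    nlinarith [norm_nonneg z, sq_nonneg ‖z‖]
  have hx₀ : |a| * ‖x₀‖ ≤ ‖z‖ + ‖y‖ := by
    have : ‖a • x₀‖ ≤ ‖a • x₀ - y‖ + ‖y‖ := by
      calc ‖a • x₀‖ = ‖(a • x₀ - y) + y‖ := by rw [sub_add_cancel]
        _ ≤ ‖a • x₀ - y‖ + ‖y‖ := norm_add_le _ _
    rw [norm_smul, Real.norm_eq_abs] at this
    rw [hzdef, norm_sub_rev]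
    exact this
  have hexp := (Real.exp_pos (-(lam * ‖z‖ ^ 2) / 2)).le
  have habs : (0:ℝ) < |a| := abs_pos.2 ha
  have key : gaussDensity (a • x₀) C y * (|a| * ‖x₀‖) ≤ c * (max 1 (2 / lam) + ‖y‖) := by
    calc gaussDensity (a • x₀) C y * (|a| * ‖x₀‖)
        ≤ (c * Real.exp (-(lam * ‖z‖ ^ 2) / 2)) * (‖z‖ + ‖y‖) := by
          refine mul_le_mul h1 hx₀ (by positivity) (by positivity)
      _ = c * (‖z‖ * Real.exp (-(lam * ‖z‖ ^ 2) / 2))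
            + c * ‖y‖ * Real.exp (-(lam * ‖z‖ ^ 2) / 2) := by ring
      _ ≤ c * max 1 (2 / lam) + c * ‖y‖ * 1 := by
          refine add_le_add (mul_le_mul_of_nonneg_left h3 hcpos.le) ?_
          exact mul_le_mul_of_nonneg_left hexp1 (by positivity)
      _ = c * (max 1 (2 / lam) + ‖y‖) := by ring
  rw [le_div_iff₀ habs]
  calc gaussDensity (a • x₀) C y * ‖x₀‖ * |a|
      = gaussDensity (a • x₀) C y * (|a| * ‖x₀‖) := by ring
    _ ≤ c * (max 1 (2 / lam) + ‖y‖) := key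

lemma gauss_continuous (C : Matrix (Fin D) (Fin D) ℝ) (a : ℝ) (y : Fin D → ℝ) :
    Continuous fun x₀ : Fin D → ℝ => gaussDensity (a • x₀) C y := by
  unfold gaussDensity
  have h1 : Continuous fun x₀ : Fin D → ℝ => y - a • x₀ := by
    exact continuous_const.sub (continuous_id.const_smul a)
  have h2 : Continuous fun x₀ : Fin D → ℝ =>
      dotProduct (y - a • x₀) (C⁻¹.mulVec (y - a • x₀)) := (quad_continuous C⁻¹).comp h1
  exact continuous_const.mul (Real.continuous_exp.comp ((h2.neg).div_const 2))

end Aux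

/-- The time-reversal drift adjustment `G ∇ ln q` as a rescaled posterior conditional
expectation of the initial value: with `q(y) = ∫ N_D(y; a x₀, v Γ) dP(x₀)` for an arbitrary
probability measure `P`, (i) `q` is finite, strictly positive and differentiable with
`∇q(y) = ∫ ∇_y N_D(y; a x₀, v Γ) dP(x₀)`; (ii) the posterior mean
`m(y) = ∫ x₀ (N_D(y; a x₀, v Γ)/q(y)) dP(x₀)` is well defined; and (iii)
`∇ ln q(y) = (1/v) Γ⁻¹ (a m(y) − y)`. -/
theorem time_reversal_drift_as_posterior_mean
    {D : ℕ} (hD : 1 ≤ D) (Γ : Matrix (Fin D) (Fin D) ℝ) (hΓ : Γ.PosDef)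
    {a v : ℝ} (ha : a ≠ 0) (hv : 0 < v)
    (P : Measure (Fin D → ℝ)) [IsProbabilityMeasure P]
    (q : (Fin D → ℝ) → ℝ)
    (hq : ∀ y, q y = ∫ x₀, gaussDensity (a • x₀) (v • Γ) y ∂P) :
    (∀ y, Integrable (fun x₀ => gaussDensity (a • x₀) (v • Γ) y) P) ∧
    (∀ y, 0 < q y) ∧
    Differentiable ℝ q ∧
    (∀ y, Integrable (fun x₀ => grad (gaussDensity (a • x₀) (v • Γ)) y) P) ∧
    (∀ y, grad q y = ∫ x₀, grad (gaussDensity (a • x₀) (v • Γ)) y ∂P) ∧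
    (∀ y, Integrable (fun x₀ => (gaussDensity (a • x₀) (v • Γ) y / q y) • x₀) P) ∧
    (∀ y, grad (fun y' => Real.log (q y')) y
        = v⁻¹ • Γ⁻¹.mulVec
            (a • (∫ x₀, (gaussDensity (a • x₀) (v • Γ) y / q y) • x₀ ∂P) - y)) := by
  classical
  set C : Matrix (Fin D) (Fin D) ℝ := v • Γ with hCdef
  have hC : C.PosDef := by
    refine Matrix.PosDef.of_dotProduct_mulVec_pos ?_ ?_
    · have h1 := hΓ.1
      rw [hCdef, Matrix.IsHermitian, Matrix.conjTranspose_smul, h1]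
      simp
    · intro x hx
      have h2 := hΓ.dotProduct_mulVec_pos hx
      rw [hCdef, Matrix.smul_mulVec, dotProduct_smul]
      simp only [star_trivial, smul_eq_mul] at h2 ⊢
      exact mul_pos hv h2
  have hBsym : (C⁻¹).transpose = C⁻¹ := by
    have h := hC.inv.1
    rw [← Matrix.conjTranspose_eq_transpose_of_trivial]
    exact h
  have hBinv : C⁻¹ = v⁻¹ • Γ⁻¹ := by
    have hΓdet : IsUnit Γ.det := isUnit_iff_ne_zero.2 hΓ.det_pos.ne'
    apply Matrix.inv_eq_right_inv
    rw [hCdef, Matrix.smul_mul, Matrix.mul_smul, smul_smul, mul_inv_cancel₀ hv.ne', one_smul,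
      Matrix.mul_nonsing_inv _ hΓdet]
  set c : ℝ := (2 * Real.pi) ^ (-(D : ℝ) / 2) * C.det ^ (-(1 : ℝ) / 2) with hc
  obtain ⟨K, hK0, hKb⟩ := gauss_grad_bound hD hC
  set F' : (Fin D → ℝ) → (Fin D → ℝ) → (Fin D → ℝ) →L[ℝ] ℝ :=
    fun y x₀ => (-(gaussDensity (a • x₀) C y)) • dotCLM (C⁻¹.mulVec (y - a • x₀)) with hF'
  have hgmeas : ∀ y, AEStronglyMeasurable (fun x₀ => gaussDensity (a • x₀) C y) P :=
    fun y => (gauss_continuous C a y).aestronglyMeasurable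
  have part1 : ∀ y, Integrable (fun x₀ => gaussDensity (a • x₀) C y) P := by
    intro y
    refine (integrable_const c).mono' (hgmeas y) (ae_of_all _ fun x₀ => ?_)
    rw [Real.norm_eq_abs, abs_of_pos (gauss_pos hC _ _)]
    exact gauss_le hC _ _
  have part2 : ∀ y, 0 < q y := by
    intro y
    rw [hq y]
    refine (integral_pos_iff_support_of_nonneg (fun x₀ => (gauss_pos hC _ _).le) (part1 y)).2 ?_
    have hsupp : Function.support (fun x₀ => gaussDensity (a • x₀) C y) = Set.univ :=
      Set.eq_univ_of_forall fun x₀ => (gauss_pos hC _ _).ne'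
    rw [hsupp]
    simp
  have hF'bound : ∀ y x₀, ‖F' y x₀‖ ≤ (D : ℝ) * K := by
    intro y x₀
    show ‖(-(gaussDensity (a • x₀) C y)) • dotCLM (C⁻¹.mulVec (y - a • x₀))‖ ≤ (D : ℝ) * K
    refine le_trans (ContinuousLinearMap.opNorm_smul_le _ _) ?_
    rw [Real.norm_eq_abs, abs_neg, abs_of_pos (gauss_pos hC _ _)]
    calc gaussDensity (a • x₀) C y * ‖dotCLM (C⁻¹.mulVec (y - a • x₀))‖
        ≤ gaussDensity (a • x₀) C y * ((D : ℝ) * ‖C⁻¹.mulVec (y - a • x₀)‖) :=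
          mul_le_mul_of_nonneg_left (dotCLM_norm_le _) (gauss_pos hC _ _).le
      _ = (D : ℝ) * (gaussDensity (a • x₀) C y * ‖C⁻¹.mulVec (y - a • x₀)‖) := by ring
      _ ≤ (D : ℝ) * K := mul_le_mul_of_nonneg_left (hKb (a • x₀) y) (Nat.cast_nonneg D)
  have hwcont : ∀ y : Fin D → ℝ, Continuous fun x₀ : Fin D → ℝ => C⁻¹.mulVec (y - a • x₀) := by
    intro y
    have h1 : Continuous fun x₀ : Fin D → ℝ => y - a • x₀ :=
      continuous_const.sub (continuous_id.const_smul a)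
    exact ((mulVecCLM C⁻¹).continuous.comp h1 : _)
  have hF'cont : ∀ y, Continuous fun x₀ => F' y x₀ := by
    intro y
    exact ((gauss_continuous C a y).neg).smul (dotCLM_continuous.comp (hwcont y))
  have hF'int : ∀ y, Integrable (fun x₀ => F' y x₀) P := fun y =>
    (integrable_const ((D : ℝ) * K)).mono' (hF'cont y).aestronglyMeasurable
      (ae_of_all _ fun x₀ => hF'bound y x₀)
  have hderiv : ∀ (x₀ y : Fin D → ℝ),
      HasFDerivAt (fun y' => gaussDensity (a • x₀) C y') (F' y x₀) y :=
    fun x₀ y => hasFDerivAt_gauss hBsym (a • x₀) y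
  have hmain : ∀ y, HasFDerivAt q (∫ x₀, F' y x₀ ∂P) y := by
    intro y
    rw [show q = fun y' => ∫ x₀, gaussDensity (a • x₀) C y' ∂P from funext hq]
    exact hasFDerivAt_integral_of_dominated_of_fderiv_le (s := Metric.ball y 1) (Metric.ball_mem_nhds y one_pos)
      (Filter.Eventually.of_forall fun y' => hgmeas y') (part1 y)
      (hF'cont y).aestronglyMeasurable
      (ae_of_all _ fun x₀ y' _ => hF'bound y' x₀)
      (integrable_const ((D : ℝ) * K))
      (ae_of_all _ fun x₀ y' _ => hderiv x₀ y')
  have part3 : Differentiable ℝ q := fun y => (hmain y).differentiableAt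
  have hFapp : ∀ (y x₀ : Fin D → ℝ) (i : Fin D),
      F' y x₀ (Pi.single i 1)
        = (-(gaussDensity (a • x₀) C y)) * C⁻¹.mulVec (y - a • x₀) i := by
    intro y x₀ i
    show ((-(gaussDensity (a • x₀) C y)) • dotCLM (C⁻¹.mulVec (y - a • x₀))) (Pi.single i 1)
        = (-(gaussDensity (a • x₀) C y)) * C⁻¹.mulVec (y - a • x₀) i
    simp [dotProduct_single]
  have hgradgauss : ∀ (x₀ y : Fin D → ℝ),
      grad (gaussDensity (a • x₀) C) y
        = (-(gaussDensity (a • x₀) C y)) • C⁻¹.mulVec (y - a • x₀) := by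
    intro x₀ y
    funext i
    rw [grad, (hderiv x₀ y).fderiv, hFapp y x₀ i]
    rfl
  have part4 : ∀ y, Integrable (fun x₀ => grad (gaussDensity (a • x₀) C) y) P := by
    intro y
    have heq : (fun x₀ => grad (gaussDensity (a • x₀) C) y)
        = fun x₀ => (-(gaussDensity (a • x₀) C y)) • C⁻¹.mulVec (y - a • x₀) :=
      funext fun x₀ => hgradgauss x₀ y
    rw [heq]
    refine (integrable_const K).mono'
      ((((gauss_continuous C a y).neg).smul (hwcont y)).aestronglyMeasurable)
      (ae_of_all _ fun x₀ => ?_)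
    refine le_trans (norm_smul_le _ _) ?_
    rw [Real.norm_eq_abs, abs_neg, abs_of_pos (gauss_pos hC _ _)]
    exact hKb (a • x₀) y
  have part5 : ∀ y, grad q y = ∫ x₀, grad (gaussDensity (a • x₀) C) y ∂P := by
    intro y
    funext i
    rw [grad, (hmain y).fderiv, ContinuousLinearMap.integral_apply (hF'int y)]
    have hr : ∫ x₀, (grad (gaussDensity (a • x₀) C) y) i ∂P
        = (∫ x₀, grad (gaussDensity (a • x₀) C) y ∂P) i :=
      (ContinuousLinearMap.proj (R := ℝ) (φ := fun _ : Fin D => ℝ) i).integral_comp_comm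
        (part4 y)
    rw [← hr]
    refine integral_congr_ae (ae_of_all _ fun x₀ => ?_)
    show F' y x₀ (Pi.single i 1) = grad (gaussDensity (a • x₀) C) y i
    rw [hFapp y x₀ i, hgradgauss x₀ y]
    rfl
  have part6 : ∀ y, Integrable (fun x₀ => (gaussDensity (a • x₀) C y / q y) • x₀) P := by
    intro y
    obtain ⟨K', hK'0, hK'b⟩ := gauss_mul_norm_bound hD hC ha y
    have hqy := part2 y
    refine (integrable_const (K' / q y)).mono'
      ((((gauss_continuous C a y).div_const (q y)).smul continuous_id).aestronglyMeasurable)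
      (ae_of_all _ fun x₀ => ?_)
    refine le_trans (norm_smul_le _ _) ?_
    rw [Real.norm_eq_abs, abs_of_pos (div_pos (gauss_pos hC _ _) hqy), div_mul_eq_mul_div]
    gcongr
    exact hK'b x₀
  refine ⟨part1, part2, part3, part4, part5, part6, ?_⟩
  intro y
  have hqy := part2 y
  have hint1 : ∫ x₀, gaussDensity (a • x₀) C y / q y ∂P = 1 := by
    rw [integral_div, ← hq y, div_self hqy.ne']
  set mY : Fin D → ℝ := ∫ x₀, (gaussDensity (a • x₀) C y / q y) • x₀ ∂P with hmY
  have hgsub : (fun x₀ => (gaussDensity (a • x₀) C y / q y) • (a • x₀ - y))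
      = fun x₀ => a • ((gaussDensity (a • x₀) C y / q y) • x₀)
          - (gaussDensity (a • x₀) C y / q y) • y := by
    funext x₀
    rw [smul_sub, smul_comm]
  have hqint : Integrable (fun x₀ => gaussDensity (a • x₀) C y / q y) P :=
    (part1 y).div_const (q y)
  have hφint : Integrable (fun x₀ => (gaussDensity (a • x₀) C y / q y) • (a • x₀ - y)) P := by
    rw [hgsub]
    exact ((part6 y).smul a).sub (hqint.smul_const y)
  have hsm : Integrable (fun x₀ => a • ((gaussDensity (a • x₀) C y / q y) • x₀)) P := by
    exact (part6 y).smul a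
  have hφval : ∫ x₀, (gaussDensity (a • x₀) C y / q y) • (a • x₀ - y) ∂P = a • mY - y := by
    rw [hgsub, integral_sub hsm (hqint.smul_const y), integral_smul,
      integral_smul_const, hint1, one_smul, hmY]
  have hlog : HasFDerivAt (fun y' => Real.log (q y'))
      ((q y)⁻¹ • (∫ x₀, F' y x₀ ∂P)) y := (hmain y).log hqy.ne'
  have e1 : grad (fun y' => Real.log (q y')) y = (q y)⁻¹ • grad q y := by
    funext i
    rw [grad, hlog.fderiv]
    show (q y)⁻¹ * (∫ x₀, F' y x₀ ∂P) (Pi.single i 1) = (q y)⁻¹ * grad q y i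
    congr 1
    rw [grad, (hmain y).fderiv]
  have e2 : grad q y = ∫ x₀, gaussDensity (a • x₀) C y • (C⁻¹.mulVec (a • x₀ - y)) ∂P := by
    rw [part5 y]
    refine integral_congr_ae (ae_of_all _ fun x₀ => ?_)
    show grad (gaussDensity (a • x₀) C) y
        = gaussDensity (a • x₀) C y • C⁻¹.mulVec (a • x₀ - y)
    rw [hgradgauss x₀ y]
    funext i
    show (-(gaussDensity (a • x₀) C y)) * C⁻¹.mulVec (y - a • x₀) i
        = gaussDensity (a • x₀) C y * C⁻¹.mulVec (a • x₀ - y) i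
    rw [show a • x₀ - y = -(y - a • x₀) from (neg_sub _ _).symm, Matrix.mulVec_neg]
    simp
  have e3 : (q y)⁻¹ • grad q y
      = ∫ x₀, C⁻¹.mulVec ((gaussDensity (a • x₀) C y / q y) • (a • x₀ - y)) ∂P := by
    rw [e2, ← integral_smul]
    refine integral_congr_ae (ae_of_all _ fun x₀ => ?_)
    show (q y)⁻¹ • (gaussDensity (a • x₀) C y • C⁻¹.mulVec (a • x₀ - y))
        = C⁻¹.mulVec ((gaussDensity (a • x₀) C y / q y) • (a • x₀ - y))
    rw [Matrix.mulVec_smul, smul_smul, div_eq_mul_inv, mul_comm]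
  have e4 : ∫ x₀, C⁻¹.mulVec ((gaussDensity (a • x₀) C y / q y) • (a • x₀ - y)) ∂P
      = C⁻¹.mulVec (a • mY - y) := by
    rw [← hφval]
    exact (mulVecCLM C⁻¹).integral_comp_comm hφint
  rw [e1, e3, e4, hBinv, Matrix.smul_mulVec]
end

section
/- Let D ≥ 1 and τ > 0. Let p_{t'|t} : ℝ^D × ℝ^D → (0,∞) be a family of measurable positive transition densities for 0 ≤ t < t' ≤ τ satisfying ∫ p_{t'|t}(x'|x) dx' = 1 and the Chapman–Kolmogorov equations ∫ p_{t'|t}(z|x) p_{t''|t'}(y|z) dz = p_{t''|t}(y|x) for 0 ≤ t < t' < t'' ≤ τ. Fix x₀ ∈ ℝ^D and a probability measure Π on ℝ^D, set h(x,t) = ∫ (p_{τ|t}(x_τ|x)/p_{τ|0}(x_τ|x₀)) dΠ(x_τ), and assume 0 < h(x,t) < ∞ for all x ∈ ℝ^D and t ∈ [0,τ). For 0 ≤ t < t' < τ define p^h_{t'|t}(x'|x) = p_{t'|t}(x'|x) h(x',t') / h(x,t). Then: (i) ∫ p^h_{t'|t}(x'|x) dx' = 1 for all x and 0 ≤ t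 < t' < τ; (ii) the family p^h satisfies the Chapman–Kolmogorov equations for 0 ≤ t < t' < t'' < τ; and (iii) for every t ∈ (0,τ) and x ∈ ℝ^D, p^h_{t|0}(x|x₀) = ∫ p_{t|0,τ}(x|x₀,x_τ) dΠ(x_τ), where p_{t|0,τ}(x|x₀,x_τ) = p_{t|0}(x|x₀) p_{τ|t}(x_τ|x) / p_{τ|0}(x_τ|x₀) is the bridge density. -/
open MeasureTheory Real Set

/-- The Doob `h`-transform `p^h_{t'|t}(x'|x) = p_{t'|t}(x'|x) h(x',t')/h(x,t)` of a
transition family by the function `h(x,t) = ∫ (p_{τ|t}(x_τ|x)/p_{τ|0}(x_τ|x₀)) dΠ(x_τ)` is a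
genuine normalized transition family satisfying Chapman–Kolmogorov, and its time-`t` marginal
started from `x₀` is the marginal of the mixture of diffusion bridges
`∫ p_{t|0,τ}(x|x₀,x_τ) dΠ(x_τ)` with bridge density
`p_{t|0,τ}(x|x₀,x_τ) = p_{t|0}(x|x₀) p_{τ|t}(x_τ|x)/p_{τ|0}(x_τ|x₀)`.
Here `p t t' x' x` denotes the transition density `p_{t'|t}(x'|x)`. -/
theorem doob_h_transform_realizes_bridge_mixture
    {D : ℕ} (hD : 1 ≤ D) {τ : ℝ} (hτ : 0 < τ)
    (p : ℝ → ℝ → (Fin D → ℝ) → (Fin D → ℝ) → ℝ)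
    (hmeas : ∀ t t', Measurable (Function.uncurry (p t t')))
    (hpos : ∀ t t', 0 ≤ t → t < t' → t' ≤ τ → ∀ x' x, 0 < p t t' x' x)
    (hnorm : ∀ t t', 0 ≤ t → t < t' → t' ≤ τ → ∀ x, ∫ x', p t t' x' x = 1)
    (hCK : ∀ t t' t'', 0 ≤ t → t < t' → t' < t'' → t'' ≤ τ → ∀ x y,
      ∫ z, p t t' z x * p t' t'' y z = p t t'' y x)
    (x₀ : Fin D → ℝ) (Pm : Measure (Fin D → ℝ)) [IsProbabilityMeasure Pm]
    (h : (Fin D → ℝ) → ℝ → ℝ)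
    (hhint : ∀ x t, 0 ≤ t → t < τ →
      Integrable (fun xτ => p t τ xτ x / p 0 τ xτ x₀) Pm)
    (hh : ∀ x t, 0 ≤ t → t < τ → h x t = ∫ xτ, p t τ xτ x / p 0 τ xτ x₀ ∂Pm)
    (hhpos : ∀ x t, 0 ≤ t → t < τ → 0 < h x t)
    (ph : ℝ → ℝ → (Fin D → ℝ) → (Fin D → ℝ) → ℝ)
    (hph : ∀ t t', 0 ≤ t → t < t' → t' < τ → ∀ x' x,
      ph t t' x' x = p t t' x' x * h x' t' / h x t) :
    (∀ t t', 0 ≤ t → t < t' → t' < τ → ∀ x, ∫ x', ph t t' x' x = 1) ∧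
    (∀ t t' t'', 0 ≤ t → t < t' → t' < t'' → t'' < τ → ∀ x y,
      ∫ z, ph t t' z x * ph t' t'' y z = ph t t'' y x) ∧
    (∀ t, 0 < t → t < τ → ∀ x,
      ph 0 t x x₀ = ∫ xτ, p 0 t x x₀ * p t τ xτ x / p 0 τ xτ x₀ ∂Pm) := by
  classical
  -- simple measurability facts
  have hmeas1 : ∀ t t' (x : Fin D → ℝ), Measurable (fun x' => p t t' x' x) := by
    intro t t' x
    exact (hmeas t t').comp (measurable_id.prodMk measurable_const)
  have hmeas2 : ∀ t t' (x' : Fin D → ℝ), Measurable (fun x => p t t' x' x) := by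
    intro t t' x'
    exact (hmeas t t').comp (measurable_const.prodMk measurable_id)
  -- integrability from nonzero integral
  have hint_of_ne : ∀ (μ : Measure (Fin D → ℝ)) (f : (Fin D → ℝ) → ℝ),
      (∫ x, f x ∂μ) ≠ 0 → Integrable f μ := by
    intro μ f hf
    by_contra hcon
    exact hf (integral_undef hcon)
  -- measurability of h in x
  have hmeash : ∀ t, 0 ≤ t → t < τ → Measurable (fun x => h x t) := by
    intro t ht htτ
    have hF : Measurable (fun q : (Fin D → ℝ) × (Fin D → ℝ) =>
        p t τ q.2 q.1 / p 0 τ q.2 x₀) := by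
      have h1 : Measurable (fun q : (Fin D → ℝ) × (Fin D → ℝ) => p t τ q.2 q.1) :=
        (hmeas t τ).comp (measurable_snd.prodMk measurable_fst)
      have h2 : Measurable (fun q : (Fin D → ℝ) × (Fin D → ℝ) => p 0 τ q.2 x₀) :=
        (hmeas 0 τ).comp (measurable_snd.prodMk measurable_const)
      exact h1.div h2
    have := hF.stronglyMeasurable.integral_prod_right'
      (ν := Pm)
    have heq : (fun x => h x t) =
        fun x => ∫ xτ, p t τ xτ x / p 0 τ xτ x₀ ∂Pm := by
      funext x; exact hh x t ht htτ
    rw [heq]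
    exact this.measurable
  -- The key identity: ∫ x', p t t' x' x * h x' t' = h x t
  have keyA : ∀ t t', 0 ≤ t → t < t' → t' < τ → ∀ x,
      ∫ x', p t t' x' x * h x' t' = h x t := by
    intro t t' ht htt' ht'τ x
    have ht'0 : 0 ≤ t' := le_trans ht htt'.le
    have hnn : ∀ x' xτ, (0:ℝ) ≤ p t' τ xτ x' / p 0 τ xτ x₀ := fun x' xτ =>
      div_nonneg (hpos t' τ ht'0 ht'τ le_rfl xτ x').le (hpos 0 τ le_rfl hτ le_rfl xτ x₀).le
    -- express ofReal (h x' t') as a lintegral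
    have hofh : ∀ x'' (s : ℝ), 0 ≤ s → s < τ → ENNReal.ofReal (h x'' s)
        = ∫⁻ xτ, ENNReal.ofReal (p s τ xτ x'' / p 0 τ xτ x₀) ∂Pm := by
      intro x'' s hs hsτ
      rw [hh x'' s hs hsτ]
      exact ofReal_integral_eq_lintegral_ofReal (hhint x'' s hs hsτ)
        (Filter.Eventually.of_forall fun xτ =>
          div_nonneg (hpos s τ hs hsτ le_rfl xτ x'').le (hpos 0 τ le_rfl hτ le_rfl xτ x₀).le)
    -- LHS as a lintegral
    have hLHS : ∫ x', p t t' x' x * h x' t'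
        = (∫⁻ x', ENNReal.ofReal (p t t' x' x * h x' t')).toReal := by
      refine integral_eq_lintegral_of_nonneg_ae
        (Filter.Eventually.of_forall fun x' =>
          mul_nonneg (hpos t t' ht htt' ht'τ.le x' x).le (hhpos x' t' ht'0 ht'τ).le) ?_
      exact ((hmeas1 t t' x).mul (hmeash t' ht'0 ht'τ)).aestronglyMeasurable
    rw [hLHS]
    -- compute the lintegral
    have hstep1 : (∫⁻ x', ENNReal.ofReal (p t t' x' x * h x' t'))
        = ∫⁻ x', ∫⁻ xτ, ENNReal.ofReal (p t t' x' x)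
            * ENNReal.ofReal (p t' τ xτ x' / p 0 τ xτ x₀) ∂Pm := by
      refine lintegral_congr fun x' => ?_
      rw [ENNReal.ofReal_mul (hpos t t' ht htt' ht'τ.le x' x).le,
        hofh x' t' ht'0 ht'τ, ← lintegral_const_mul' _ _ ENNReal.ofReal_ne_top]
    have hswap : (∫⁻ x', ∫⁻ xτ, ENNReal.ofReal (p t t' x' x)
            * ENNReal.ofReal (p t' τ xτ x' / p 0 τ xτ x₀) ∂Pm)
        = ∫⁻ xτ, ∫⁻ x', ENNReal.ofReal (p t t' x' x)
            * ENNReal.ofReal (p t' τ xτ x' / p 0 τ xτ x₀) ∂(volume) ∂Pm := by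
      refine lintegral_lintegral_swap ?_
      have h1 : Measurable (fun q : (Fin D → ℝ) × (Fin D → ℝ) => p t t' q.1 x) :=
        (hmeas1 t t' x).comp measurable_fst
      have h2 : Measurable (fun q : (Fin D → ℝ) × (Fin D → ℝ) =>
          p t' τ q.2 q.1 / p 0 τ q.2 x₀) :=
        ((hmeas t' τ).comp (measurable_snd.prodMk measurable_fst)).div
          ((hmeas 0 τ).comp (measurable_snd.prodMk measurable_const))
      exact ((h1.ennreal_ofReal).mul (h2.ennreal_ofReal)).aemeasurable
    have hinner : ∀ xτ, (∫⁻ x', ENNReal.ofReal (p t t' x' x)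
            * ENNReal.ofReal (p t' τ xτ x' / p 0 τ xτ x₀))
        = ENNReal.ofReal (p t τ xτ x / p 0 τ xτ x₀) := by
      intro xτ
      have hc : (0:ℝ) < p 0 τ xτ x₀ := hpos 0 τ le_rfl hτ le_rfl xτ x₀
      have e1 : ∀ x', ENNReal.ofReal (p t t' x' x)
            * ENNReal.ofReal (p t' τ xτ x' / p 0 τ xτ x₀)
          = ENNReal.ofReal (p t t' x' x * p t' τ xτ x') * ENNReal.ofReal ((p 0 τ xτ x₀)⁻¹) := by
        intro x'
        rw [div_eq_mul_inv, ENNReal.ofReal_mul (hpos t' τ ht'0 ht'τ le_rfl xτ x').le,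
          ENNReal.ofReal_mul (hpos t t' ht htt' ht'τ.le x' x).le, mul_assoc]
      simp only [e1]
      rw [lintegral_mul_const' _ _ ENNReal.ofReal_ne_top]
      have hck := hCK t t' τ ht htt' ht'τ le_rfl x xτ
      have hintp : Integrable (fun z => p t t' z x * p t' τ xτ z) := by
        refine hint_of_ne _ _ ?_
        rw [hck]
        exact (hpos t τ ht (lt_trans htt' ht'τ) le_rfl xτ x).ne'
      rw [← ofReal_integral_eq_lintegral_ofReal hintp
        (Filter.Eventually.of_forall fun z =>
          mul_nonneg (hpos t t' ht htt' ht'τ.le z x).le (hpos t' τ ht'0 ht'τ le_rfl xτ z).le),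
        hck, ← ENNReal.ofReal_mul (hpos t τ ht (lt_trans htt' ht'τ) le_rfl xτ x).le,
        ← div_eq_mul_inv]
    rw [hstep1, hswap]
    simp only [hinner]
    rw [← hofh x t ht (lt_trans htt' ht'τ)]
    exact ENNReal.toReal_ofReal (hhpos x t ht (lt_trans htt' ht'τ)).le
  refine ⟨?_, ?_, ?_⟩
  · -- normalization
    intro t t' ht htt' ht'τ x
    have hx : 0 < h x t := hhpos x t ht (lt_trans htt' ht'τ)
    have : ∫ x', ph t t' x' x = (∫ x', p t t' x' x * h x' t') / h x t := by
      rw [← integral_div]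
      exact integral_congr_ae (Filter.Eventually.of_forall fun x' =>
        hph t t' ht htt' ht'τ x' x)
    rw [this, keyA t t' ht htt' ht'τ x, div_self hx.ne']
  · -- Chapman–Kolmogorov
    intro t t' t'' ht htt' ht't'' ht''τ x y
    have ht'0 : 0 ≤ t' := le_trans ht htt'.le
    have ht'τ : t' < τ := lt_trans ht't'' ht''τ
    have hx : 0 < h x t := hhpos x t ht (lt_trans htt' ht'τ)
    have key : ∀ z, ph t t' z x * ph t' t'' y z
        = (p t t' z x * p t' t'' y z) * (h y t'' / h x t) := by
      intro z
      rw [hph t t' ht htt' ht'τ z x, hph t' t'' ht'0 ht't'' ht''τ y z]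
      have hz : (h z t' : ℝ) ≠ 0 := (hhpos z t' ht'0 ht'τ).ne'
      field_simp
    calc ∫ z, ph t t' z x * ph t' t'' y z
        = ∫ z, (p t t' z x * p t' t'' y z) * (h y t'' / h x t) := by
          exact integral_congr_ae (Filter.Eventually.of_forall key)
      _ = (∫ z, p t t' z x * p t' t'' y z) * (h y t'' / h x t) := integral_mul_const _ _
      _ = p t t'' y x * h y t'' / h x t := by
          rw [hCK t t' t'' ht htt' ht't'' ht''τ.le x y, mul_div_assoc]
      _ = ph t t'' y x := (hph t t'' ht (lt_trans htt' ht't'') ht''τ y x).symm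
  · -- bridge mixture marginal
    intro t ht htτ x
    have hh0 : h x₀ 0 = 1 := by
      rw [hh x₀ 0 le_rfl hτ]
      have : ∀ xτ, p 0 τ xτ x₀ / p 0 τ xτ x₀ = (1:ℝ) := fun xτ =>
        div_self (hpos 0 τ le_rfl hτ le_rfl xτ x₀).ne'
      simp only [this]
      simp
    rw [hph 0 t le_rfl ht htτ x x₀, hh0, div_one, hh x t ht.le htτ, ← integral_const_mul]
    exact integral_congr_ae (Filter.Eventually.of_forall fun xτ => by
      simp [mul_div_assoc])
end
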